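/- Assume Hypothesis 7.1 holds for the subset I ⊆ S, and let u, v ∈ U^I_min. (i) If u ≠ v, then there is no ν ∈ ℕ^N with Σ_{j=1}^N ν_j·a_j^+ = p·u − v such that ν = (p−1)·(e_1 + ⋯ + e_{μ_I}) + p·e_{μ_I+k_u} − e_{μ_I+k_v}. (ii) If u = v, then the vector ν ∈ ℕ^N with ν_j = p−1 for j ∈ {1, …, μ_I} ∪ {μ_I + k_u} and ν_j = 0 otherwise satisfies Σ_{j=1}^N ν_j·a_j^+ = p·u − u = (p−1)·u, so the monomial Λ_1^{p−1} ⋯ Λ_{μ_I}^{p−1}·Λ_{μ_I+k_u}^{p−1} occurs in Ā^I_{uu}(Λ) with coefficient (−1)^{μ_I+1}·((p−1)!)^{−(μ_I+1)} in 𝔽_p, which is nonzero. -/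

import Mathlib

/-- `a_j⁺ = (a_{0j}, …, a_{nj}, 1) ∈ ℕ^{n+2}`. -/
def aplus {n N : ℕ} (a : Fin N → Fin (n + 1) → ℕ) (j : Fin N) : Fin (n + 2) → ℕ :=
  Fin.snoc (a j) 1

lemma sum_split {M : Type*} [AddCommMonoid M] {N : ℕ} (μ k : ℕ) (hk : μ ≤ k) (hkN : k < N)
    (f : Fin N → M) :
    ∑ j : Fin N, (if (j : ℕ) < μ ∨ (j : ℕ) = k then f j else 0)
      = (∑ t : Fin μ, f ⟨t, by omega⟩) + f ⟨k, hkN⟩ := by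
  have h1 : ∀ j : Fin N, (if (j : ℕ) < μ ∨ (j : ℕ) = k then f j else 0)
      = (if (j : ℕ) < μ then f j else 0) + (if (j : ℕ) = k then f j else 0) := by
    intro j
    by_cases h : (j : ℕ) < μ
    · have h' : ¬ (j : ℕ) = k := by omega
      simp [h, h']
    · have hkμ : ¬ k < μ := by omega
      by_cases h' : (j : ℕ) = k <;> simp [h, h', hkμ]
  rw [Finset.sum_congr rfl (fun j _ => h1 j), Finset.sum_add_distrib]
  congr 1
  · have hμN : μ ≤ N := by omega
    set F : ℕ → M := fun j => if h : j < N then f ⟨j, h⟩ else 0 with hF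
    have e1 : ∑ j : Fin N, (if (j : ℕ) < μ then f j else 0)
        = ∑ j ∈ Finset.range N, (if j < μ then F j else 0) := by
      rw [Finset.sum_range fun j => if j < μ then F j else 0]
      apply Finset.sum_congr rfl
      intro j _
      simp [hF, j.isLt]
    rw [e1, ← Finset.sum_filter]
    have e2 : (Finset.range N).filter (· < μ) = Finset.range μ := by
      ext j; simp; omega
    rw [e2, Finset.sum_range fun j => F j]
    apply Finset.sum_congr rfl
    intro t _
    simp [hF, lt_of_lt_of_le t.isLt hμN]
  · have h2 : ∀ j : Fin N, ((j : ℕ) = k) = (j = ⟨k, hkN⟩) := by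
      intro j; rw [Fin.ext_iff]
    simp only [h2]
    rw [Finset.sum_ite_eq' Finset.univ (⟨k, hkN⟩ : Fin N) f]
    simp


/-- Lemma 7.6: under Hypothesis 7.1, for `u = umin r`, `v = umin c`
in `U^I_min`:
(i) if `u ≠ v`, no `ν ∈ ℕ^N` with `∑_j ν_j a_j⁺ = p·u − v` equals
`(p−1)(e₁+⋯+e_{μ_I}) + p·e_{μ_I+k_u} − e_{μ_I+k_v}`;
(ii) if `u = v`, the vector `ν` with `ν_j = p−1` for `j ∈ {1,…,μ_I} ∪ {μ_I+k_u}` and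
`ν_j = 0` otherwise satisfies `∑_j ν_j a_j⁺ = p·u − u`, so the monomial
`Λ₁^{p−1}⋯Λ_{μ_I}^{p−1}·Λ_{μ_I+k_u}^{p−1}` occurs in `Ā^I_{uu}` with the nonzero
coefficient `(−1)^{μ_I+1}((p−1)!)^{−(μ_I+1)}` in `𝔽_p`. -/
theorem stmt_11 (p n N d : ℕ) (hp : p.Prime) (hn : 1 ≤ n) (hN : 1 ≤ N) (hd : 2 ≤ d)
    (a : Fin N → Fin (n + 1) → ℕ) (ha : ∀ j, ∑ i, a j i = d)
    (I : Finset (Fin (n + 1)))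
    (μ m : ℕ) (hμ : μ + 1 = (I.card + d - 1) / d)
    (umin : Fin m → Fin (n + 2) → ℕ)
    (huinj : Function.Injective umin)
    (hurange : ∀ u : Fin (n + 2) → ℕ,
      ((∑ i : Fin (n + 1), u i.castSucc = d * u (Fin.last (n + 1))) ∧
        (∀ i ∈ I, 0 < u i.castSucc) ∧ u (Fin.last (n + 1)) = μ + 1)
      ↔ ∃ r : Fin m, umin r = u)
    (hNm : μ + m ≤ N)
    (κ : Fin m → Fin m)
    (hκ : ∀ r : Fin m, ∀ i : Fin (n + 2),
      umin r i = aplus a ⟨μ + (κ r : ℕ), by have := (κ r).isLt; omega⟩ i +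
        ∑ t : Fin μ, aplus a ⟨(t : ℕ), by have := t.isLt; omega⟩ i)
    (r c : Fin m)
    (A : MvPolynomial (Fin N) (ZMod p))
    (hA : ∀ m' : Fin N →₀ ℕ, A.coeff m' =
      if (∀ j, m' j ≤ p - 1) ∧
          (∀ i : Fin (n + 2), ∑ j, (m' j : ℤ) * (aplus a j i : ℤ)
            = p * umin r i - umin r i)
      then (-1) ^ (μ + 1) * (∏ j, ((m' j).factorial : ZMod p))⁻¹
      else 0) :
    (umin r ≠ umin c → ∀ ν : Fin N → ℕ,
      (∀ i : Fin (n + 2), ∑ j, (ν j : ℤ) * (aplus a j i : ℤ) = p * umin r i - umin c i) →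
      ¬ (∀ j : Fin N, (ν j : ℤ) = (if (j : ℕ) < μ then (p : ℤ) - 1 else 0)
          + (if (j : ℕ) = μ + (κ r : ℕ) then (p : ℤ) else 0)
          - (if (j : ℕ) = μ + (κ c : ℕ) then 1 else 0))) ∧
    (∀ ν : Fin N → ℕ,
      (∀ j : Fin N, ν j = if (j : ℕ) < μ ∨ (j : ℕ) = μ + (κ r : ℕ) then p - 1 else 0) →
      (∀ i : Fin (n + 2),
        ∑ j, (ν j : ℤ) * (aplus a j i : ℤ) = p * umin r i - umin r i) ∧
      A.coeff (Finsupp.equivFunOnFinite.symm ν)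
          = (-1) ^ (μ + 1) * (((p - 1).factorial : ZMod p))⁻¹ ^ (μ + 1) ∧
      A.coeff (Finsupp.equivFunOnFinite.symm ν) ≠ 0) := by
  haveI : Fact p.Prime := ⟨hp⟩
  have hkrN : μ + (κ r : ℕ) < N := by have := (κ r).isLt; omega
  have hkcN : μ + (κ c : ℕ) < N := by have := (κ c).isLt; omega
  constructor
  · -- part (i)
    intro hne ν _ hform
    have hκne : (κ r : ℕ) ≠ (κ c : ℕ) := by
      intro h
      apply hne
      funext i
      rw [hκ r i, hκ c i]
      simp only [h]
    have h0 := hform ⟨μ + (κ c : ℕ), hkcN⟩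
    rw [if_neg (by simp), if_neg (by simp; omega), if_pos rfl] at h0
    omega
  · -- part (ii)
    intro ν hν
    have hsum : ∀ i : Fin (n + 2),
        ∑ j, (ν j : ℤ) * (aplus a j i : ℤ) = ((p : ℤ) - 1) * umin r i := by
      intro i
      have e : ∀ j : Fin N, (ν j : ℤ) * (aplus a j i : ℤ)
          = if (j : ℕ) < μ ∨ (j : ℕ) = μ + (κ r : ℕ)
            then ((p : ℤ) - 1) * (aplus a j i : ℤ) else 0 := by
        intro j
        rw [hν j]
        split_ifs with h
        · rw [Nat.cast_sub hp.one_le, Nat.cast_one]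
        · simp
      rw [Finset.sum_congr rfl (fun j _ => e j),
        sum_split μ (μ + (κ r : ℕ)) (by omega) hkrN, ← Finset.mul_sum]
      have h2 : ((umin r i : ℕ) : ℤ)
          = (aplus a ⟨μ + (κ r : ℕ), hkrN⟩ i : ℤ)
            + ∑ t : Fin μ, (aplus a ⟨(t : ℕ), by omega⟩ i : ℤ) := by
        rw [hκ r i]
        push_cast
        ring
      rw [h2]
      ring
    have hsum2 : ∀ i : Fin (n + 2),
        ∑ j, (ν j : ℤ) * (aplus a j i : ℤ) = p * umin r i - umin r i := by
      intro i; rw [hsum i]; ring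
    refine ⟨hsum2, ?_, ?_⟩
    · rw [hA]
      rw [if_pos]
      · congr 1
        have hprod : ∏ j : Fin N, (((Finsupp.equivFunOnFinite.symm ν) j).factorial : ZMod p)
            = (((p - 1).factorial : ZMod p)) ^ (μ + 1) := by
          have e : ∀ j : Fin N, (((Finsupp.equivFunOnFinite.symm ν) j).factorial : ZMod p)
              = if (j : ℕ) < μ ∨ (j : ℕ) = μ + (κ r : ℕ)
                then (((p - 1).factorial : ZMod p)) else 1 := by
            intro j
            simp only [Finsupp.equivFunOnFinite_symm_apply_apply, hν j]
            split_ifs <;> simp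
          rw [Finset.prod_congr rfl (fun j _ => e j), ← Finset.prod_filter,
            Finset.prod_const]
          congr 1
          rw [Finset.card_filter,
            sum_split (M := ℕ) μ (μ + (κ r : ℕ)) (by omega) hkrN (fun _ => 1)]
          simp
        rw [hprod, ← inv_pow]
      · constructor
        · intro j
          simp only [Finsupp.equivFunOnFinite_symm_apply_apply, hν j]
          split <;> omega
        · intro i
          simp only [Finsupp.equivFunOnFinite_symm_apply_apply]
          exact hsum2 i
    · rw [hA, if_pos]
      · have h1 : (∏ j : Fin N, (((Finsupp.equivFunOnFinite.symm ν) j).factorial : ZMod p))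
            ≠ 0 := by
          apply Finset.prod_ne_zero_iff.2
          intro j _
          simp only [Finsupp.equivFunOnFinite_symm_apply_apply, hν j]
          split_ifs
          · rw [ZMod.wilsons_lemma]
            exact neg_ne_zero.2 one_ne_zero
          · simp
        intro h
        rcases mul_eq_zero.1 h with h' | h'
        · exact pow_ne_zero _ (neg_ne_zero.2 one_ne_zero) h'
        · exact inv_ne_zero h1 h'
      · constructor
        · intro j
          simp only [Finsupp.equivFunOnFinite_symm_apply_apply, hν j]
          split <;> omega
        · intro i
          simp only [Finsupp.equivFunOnFinite_symm_apply_apply]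
          exact hsum2 i
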